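/- Let (Γ, ι) be a computable group and ([F_n, Z_n])_{n≥1} a sequence of left monotilings of Γ such that (F_n) is a canonically computable sequence of finite sets and e ∈ F_n for all n ≥ 1. Then the following are equivalent: (i) there is a total computable function φ : ℕ² → Γ such that Z_n = {φ(n,1), φ(n,2), …} for every n ≥ 1; (ii) the sequence of sets (Z_n)_{n≥1} is computable, i.e. the map (n, g) ↦ 1_{Z_n}(g) is computable. -/

import Mathlib

open scoped Pointwise
open Filter Topology

/-- `[F, Z]` is a left monotiling of `Γ`. -/
def IsLeftMonotiling {Γ : Type*} [Group Γ] (F Z : Set Γ) : Prop :=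
  ∀ g : Γ, ∃! p : Γ × Γ, p.1 ∈ F ∧ p.2 ∈ Z ∧ g = p.1 * p.2

/-- `(ι : Γ → ℕ)` is an admissible indexing: it is injective with computable (decidable)
range, and multiplication, transported along `ι`, is computable. -/
def IsComputableGroup {Γ : Type*} [Group Γ] (ι : Γ → ℕ) : Prop :=
  Function.Injective ι ∧
    (∃ χ : ℕ → Bool, Computable χ ∧ ∀ m, χ m = true ↔ m ∈ Set.range ι) ∧
    ∃ m : ℕ → ℕ → ℕ, Computable₂ m ∧ ∀ a b : Γ, m (ι a) (ι b) = ι (a * b)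

/-- A sequence of finite subsets of `Γ` is canonically computable w.r.t. the indexing `ι`
if the map sending `n` to the canonical index `∑_{x ∈ ι(F n)} 2^x` is computable. -/
def CanonicallyComputable {Γ : Type*} (ι : Γ → ℕ) (F : ℕ → Finset Γ) : Prop :=
  Computable fun n => ∑ x ∈ (F n).image ι, 2 ^ x

lemma sum_range_two_pow_lt (a : ℕ) : ∑ x ∈ Finset.range a, 2 ^ x < 2 ^ a := by
  induction a with
  | zero => simp
  | succ n ih =>
    rw [Finset.sum_range_succ]
    have := Nat.pow_pos (n := n + 1) (by norm_num : 0 < 2)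
    simp [pow_succ] at *; omega

lemma sum_two_pow_testBit (s : Finset ℕ) (k : ℕ) :
    (∑ x ∈ s, 2 ^ x).testBit k = decide (k ∈ s) := by
  induction s using Finset.induction_on_max with
  | empty => simp
  | insert a s ha ih =>
    have hna : a ∉ s := fun h => lt_irrefl a (ha a h)
    have hlt : ∑ x ∈ s, 2 ^ x < 2 ^ a :=
      lt_of_le_of_lt
        (Finset.sum_le_sum_of_subset fun x hx => Finset.mem_range.2 (ha x hx))
        (sum_range_two_pow_lt a)
    rw [Finset.sum_insert hna]
    rcases lt_trichotomy k a with h | h | h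
    · rw [Nat.testBit_two_pow_add_gt h, ih]
      have : k ≠ a := h.ne
      simp [Finset.mem_insert, this]
    · subst h
      rw [Nat.testBit_two_pow_add_eq, Nat.testBit_eq_false_of_lt hlt]
      simp
    · have h2 : 2 ^ a + ∑ x ∈ s, 2 ^ x < 2 ^ k := by
        have h3 : 2 ^ (a + 1) ≤ 2 ^ k := Nat.pow_le_pow_right (by norm_num) h
        have := pow_succ 2 a ▸ h3
        omega
      rw [Nat.testBit_eq_false_of_lt h2]
      have h1 : k ∉ insert a s := by
        simp only [Finset.mem_insert]
        rintro (rfl | hk)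
        · exact lt_irrefl _ h
        · exact absurd (ha k hk) (not_lt.2 h.le)
      simp [h1]

lemma testBit_computable : Computable₂ Nat.testBit := by
  have h1 : Primrec₂ (fun a b : ℕ => a ^ b) := Primrec₂.unpaired'.1 Nat.Primrec.pow
  have h2 : Primrec fun p : ℕ × ℕ => decide (p.1 / 2 ^ p.2 % 2 = 1) :=
    Primrec.eq.comp
      (Primrec.nat_mod.comp
        (Primrec.nat_div.comp Primrec.fst (h1.comp (Primrec.const 2) Primrec.snd))
        (Primrec.const 2))
      (Primrec.const 1) |>.decide
  exact Computable₂.mk ((h2.of_eq fun p => (Nat.testBit_eq_decide_div_mod_eq).symm).to_comp)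

theorem stmt5 {Γ : Type*} [Group Γ] [Countable Γ] [Infinite Γ] [DecidableEq Γ]
    (ι : Γ → ℕ) (hcg : IsComputableGroup ι)
    (F : ℕ → Finset Γ) (Z : ℕ → Set Γ)
    (htile : ∀ n, IsLeftMonotiling (↑(F n)) (Z n))
    (hcc : CanonicallyComputable ι F)
    (he : ∀ n, (1 : Γ) ∈ F n) :
    (∃ φ : ℕ → ℕ → ℕ, Computable₂ φ ∧
        ∀ n, ι '' Z n = Set.range fun i : ℕ => φ n (i + 1)) ↔
      ∃ χ : ℕ → ℕ → Bool, Computable₂ χ ∧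
        ∀ (n : ℕ) (g : Γ), χ n (ι g) = true ↔ g ∈ Z n := by
  classical
  obtain ⟨hinj, ⟨χR, hχR, hχRspec⟩, mZ, hmZ, hmZspec⟩ := hcg
  obtain ⟨c, hcC, hceq⟩ : ∃ c : ℕ → ℕ, Computable c ∧
      ∀ n, c n = ∑ x ∈ (F n).image ι, 2 ^ x := ⟨_, hcc, fun _ => rfl⟩
  have hbitF : ∀ n k, (c n).testBit k = true ↔ k ∈ (F n).image ι := by
    intro n k
    rw [hceq, sum_two_pow_testBit]
    simp
  have hand : Computable₂ (· && · : Bool → Bool → Bool) := (Primrec.dom_bool₂ _).to_comp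
  have hor : Computable₂ (· || · : Bool → Bool → Bool) := (Primrec.dom_bool₂ _).to_comp
  have hnot : Computable (fun b : Bool => !b) := (Primrec.dom_bool _).to_comp
  have heq : Computable₂ (fun a b : ℕ => decide (a = b)) := Primrec.eq.decide.to_comp
  have hu1 : Computable fun x : (ℕ × ℕ) × ℕ => x.2.unpair.1 :=
    (Primrec.fst.comp (Primrec.unpair.comp Primrec.snd)).to_comp
  have hu2 : Computable fun x : (ℕ × ℕ) × ℕ => x.2.unpair.2 :=
    (Primrec.snd.comp (Primrec.unpair.comp Primrec.snd)).to_comp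
  constructor
  · -- (i) → (ii)
    rintro ⟨φ, hφ, hφspec⟩
    obtain ⟨Qb, hQbC, hQbeq⟩ : ∃ f : ℕ × ℕ → ℕ → Bool, Computable₂ f ∧ ∀ q j, f q j =
        ((!χR q.2) || ((c q.1).testBit j.unpair.1 &&
          decide (q.2 = mZ j.unpair.1 (φ q.1 (j.unpair.2 + 1))))) := by
      refine ⟨_, ?_, fun _ _ => rfl⟩
      exact Computable₂.mk
        (hor.comp (hnot.comp (hχR.comp (Computable.snd.comp Computable.fst)))
          (hand.comp
            (testBit_computable.comp (hcC.comp (Computable.fst.comp Computable.fst)) hu1)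
            (heq.comp (Computable.snd.comp Computable.fst)
              (hmZ.comp hu1
                (hφ.comp (Computable.fst.comp Computable.fst)
                  (Computable.succ.comp hu2))))))
    obtain ⟨Ab, hAbC, hAbeq⟩ : ∃ f : ℕ × ℕ → ℕ → Bool, Computable₂ f ∧ ∀ q j, f q j =
        (χR q.2 && decide (q.2 = φ q.1 (j.unpair.2 + 1))) := by
      refine ⟨_, ?_, fun _ _ => rfl⟩
      exact Computable₂.mk
        (hand.comp (hχR.comp (Computable.snd.comp Computable.fst))
          (heq.comp (Computable.snd.comp Computable.fst)
            (hφ.comp (Computable.fst.comp Computable.fst) (Computable.succ.comp hu2))))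
    have hpart : Partrec fun q : ℕ × ℕ => (Nat.rfind (Qb q : ℕ →. Bool)).map (Ab q) :=
      (Partrec.rfind hQbC.partrec₂).map hAbC
    refine ⟨fun n k => decide (∃ g, ι g = k ∧ g ∈ Z n), ?_, ?_⟩
    · refine Partrec.of_eq_tot hpart ?_
      rintro ⟨n, k⟩
      by_cases hk : χR k = true
      · obtain ⟨g, rfl⟩ := (hχRspec k).1 hk
        obtain ⟨⟨f, z⟩, ⟨hfF, hzZ, hgfz⟩, _⟩ := htile n g
        have hzim : ι z ∈ Set.range fun i : ℕ => φ n (i + 1) := by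
          rw [← hφspec n]; exact ⟨z, hzZ, rfl⟩
        obtain ⟨i, hi'⟩ := hzim
        have hi : φ n (i + 1) = ι z := hi'
        have hQj0 : Qb (n, ι g) (Nat.pair (ι f) i) = true := by
          rw [hQbeq]
          simp only [Nat.unpair_pair]
          rw [Bool.or_eq_true, Bool.and_eq_true]
          refine Or.inr ⟨(hbitF n (ι f)).2 (Finset.mem_image.2 ⟨f, hfF, rfl⟩), ?_⟩
          rw [hi, hmZspec, ← hgfz]
          simp
        have hdom : (Nat.rfind (Qb (n, ι g) : ℕ →. Bool)).Dom :=
          Nat.rfind_dom.2 ⟨Nat.pair (ι f) i, by simp [hQj0], fun {_} _ => trivial⟩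
        have ha : (Nat.rfind (Qb (n, ι g) : ℕ →. Bool)).get hdom ∈
            Nat.rfind (Qb (n, ι g) : ℕ →. Bool) := Part.get_mem hdom
        set a := (Nat.rfind (Qb (n, ι g) : ℕ →. Bool)).get hdom with hadef
        have hQa : Qb (n, ι g) a = true := by
          have := Nat.rfind_spec ha
          simpa using this
        rw [hQbeq, hk] at hQa
        simp only [Bool.not_true, Bool.false_or, Bool.and_eq_true] at hQa
        obtain ⟨ht1, ht2⟩ := hQa
        obtain ⟨f', hf'F, hf'⟩ := Finset.mem_image.1 ((hbitF n _).1 ht1)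
        have hz'mem : φ n (a.unpair.2 + 1) ∈ ι '' Z n := by
          rw [hφspec n]; exact ⟨a.unpair.2, rfl⟩
        obtain ⟨z', hz'Z, hz'⟩ := hz'mem
        have hgdec : g = f' * z' := by
          apply hinj
          rw [← hmZspec, hf', hz']
          exact of_decide_eq_true ht2
        refine (Part.mem_map_iff _).2 ⟨a, ha, ?_⟩
        rw [hAbeq, hk, Bool.true_and]
        apply decide_eq_decide.mpr
        constructor
        · intro h
          exact ⟨z', by rw [hz', ← h], hz'Z⟩
        · rintro ⟨g', hg'eq, hg'Z⟩
          have hg'g : g' = g := hinj hg'eq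
          subst hg'g
          have hpair : ((f', z') : Γ × Γ) = (1, g') :=
            (htile n g').unique ⟨Finset.mem_coe.2 hf'F, hz'Z, hgdec⟩
              ⟨Finset.mem_coe.2 (he n), hg'Z, (one_mul g').symm⟩
          have : z' = g' := congrArg Prod.snd hpair
          rw [← hz', this]
      · have hk' : χR k = false := by revert hk; cases χR k <;> simp
        have hQ0 : Qb (n, k) 0 = true := by rw [hQbeq, hk']; simp
        have hdom : (Nat.rfind (Qb (n, k) : ℕ →. Bool)).Dom :=
          Nat.rfind_dom.2 ⟨0, by simp [hQ0], fun {_} _ => trivial⟩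
        have ha : (Nat.rfind (Qb (n, k) : ℕ →. Bool)).get hdom ∈
            Nat.rfind (Qb (n, k) : ℕ →. Bool) := Part.get_mem hdom
        refine (Part.mem_map_iff _).2 ⟨_, ha, ?_⟩
        have hne : ¬∃ g, ι g = k ∧ g ∈ Z n := by
          rintro ⟨g, rfl, _⟩
          rw [(hχRspec (ι g)).2 ⟨g, rfl⟩] at hk'
          simp at hk'
        simp [hAbeq, hk', hne]
    · intro n g
      rw [decide_eq_true_iff]
      constructor
      · rintro ⟨g', hg'eq, hg'Z⟩
        rwa [← hinj hg'eq]
      · intro h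
        exact ⟨g, rfl, h⟩
  · -- (ii) → (i)
    rintro ⟨χ, hχ, hχspec⟩
    obtain ⟨test, htestC, htesteq⟩ : ∃ t : ℕ → ℕ → Bool, Computable₂ t ∧
        ∀ n k, t n k = (χR k && χ n k) :=
      ⟨_, Computable₂.mk (hand.comp (hχR.comp Computable.snd) hχ), fun _ _ => rfl⟩
    have htest_iff : ∀ n k, test n k = true ↔ k ∈ ι '' Z n := by
      intro n k
      rw [htesteq, Bool.and_eq_true]
      constructor
      · rintro ⟨hr, hx⟩
        obtain ⟨g, rfl⟩ := (hχRspec k).1 hr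
        exact ⟨g, (hχspec n g).1 hx, rfl⟩
      · rintro ⟨g, hg, rfl⟩
        exact ⟨(hχRspec _).2 ⟨g, rfl⟩, (hχspec n g).2 hg⟩
    have hex : ∀ n, ∃ k, test n k = true := by
      intro n
      obtain ⟨⟨f, z⟩, ⟨_, hz, _⟩, _⟩ := htile n 1
      exact ⟨ι z, (htest_iff n _).2 ⟨z, hz, rfl⟩⟩
    have hsub1 : Computable fun q : ℕ × ℕ => test q.1 (q.2 - 1) :=
      htestC.comp Computable.fst
        ((Primrec.nat_sub.comp Primrec.snd (Primrec.const 1)).to_comp)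
    obtain ⟨cnd, hcndC, hcndeq⟩ : ∃ f : ℕ × ℕ → ℕ → Bool, Computable₂ f ∧ ∀ q k, f q k =
        (test q.1 (q.2 - 1) || test q.1 k) := by
      refine ⟨_, ?_, fun _ _ => rfl⟩
      exact Computable₂.mk
        (hor.comp (hsub1.comp Computable.fst)
          (htestC.comp (Computable.fst.comp Computable.fst) Computable.snd))
    obtain ⟨mpf, hmpfC, hmpfeq⟩ : ∃ f : ℕ × ℕ → ℕ → ℕ, Computable₂ f ∧ ∀ q k, f q k =
        (if test q.1 (q.2 - 1) = true then q.2 - 1 else k) := by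
      refine ⟨_, ?_, fun _ _ => rfl⟩
      refine Computable₂.mk ?_
      have hc : Computable fun x : (ℕ × ℕ) × ℕ =>
          cond (test x.1.1 (x.1.2 - 1)) (x.1.2 - 1) x.2 :=
        Computable.cond (hsub1.comp Computable.fst)
          ((Primrec.nat_sub.comp (Primrec.snd.comp Primrec.fst) (Primrec.const 1)).to_comp)
          Computable.snd
      exact hc.of_eq fun x => by rw [Bool.cond_eq_ite]
    have hpart : Partrec fun q : ℕ × ℕ => (Nat.rfind (cnd q : ℕ →. Bool)).map (mpf q) :=
      (Partrec.rfind hcndC.partrec₂).map hmpfC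
    refine ⟨fun n i => if test n (i - 1) = true then i - 1 else Nat.find (hex n), ?_, ?_⟩
    · refine Partrec.of_eq_tot hpart ?_
      rintro ⟨n, i⟩
      by_cases ht : test n (i - 1) = true
      · have hdom : (Nat.rfind (cnd (n, i) : ℕ →. Bool)).Dom :=
          Nat.rfind_dom.2 ⟨0, by simp [hcndeq, ht], fun {_} _ => trivial⟩
        refine (Part.mem_map_iff _).2 ⟨_, Part.get_mem hdom, ?_⟩
        simp [hmpfeq, ht]
      · have hmem : Nat.find (hex n) ∈ Nat.rfind (cnd (n, i) : ℕ →. Bool) := by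
          refine Nat.mem_rfind.2 ⟨?_, ?_⟩
          · simp [hcndeq, ht, Nat.find_spec (hex n)]
          · intro m hm
            have := Nat.find_min (hex n) hm
            simp only [Bool.not_eq_true] at this
            have ht' : test n (i - 1) = false := by revert ht; cases test n (i - 1) <;> simp
            simp [hcndeq, ht', this]
        refine (Part.mem_map_iff _).2 ⟨_, hmem, ?_⟩
        simp [hmpfeq, ht]
    · intro n
      ext k
      simp only [Set.mem_range]
      constructor
      · intro hk
        have h1 : test n k = true := (htest_iff n k).2 hk
        exact ⟨k, by simp [h1]⟩
      · rintro ⟨i, rfl⟩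
        simp only [Nat.add_sub_cancel]
        by_cases ht : test n i = true
        · rw [if_pos ht]
          exact (htest_iff n i).1 ht
        · rw [if_neg ht]
          exact (htest_iff n _).1 (Nat.find_spec (hex n))
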